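/- Let t_1, ..., t_m be real numbers with 0 < t_i ≤ 1 for every i ∈ {1,...,m}, and let q be a real number with q ≥ (1/m) ∑_{j=1}^{m} t_j (so in particular q > 0). Then ∑_{i=1}^{m} t_i(1 − t_i) / q^2 ≤ ∑_{i=1}^{m} (1 − t_i)/t_i. -/

import Mathlib

open Finset

/-- For real numbers `t i` with `0 < t i ≤ 1` and any real `q` at least the
arithmetic mean of the `t i`, one has
`∑ i, t i * (1 - t i) / q^2 ≤ ∑ i, (1 - t i) / t i`. -/
theorem sum_div_sq_le_sum_inv
    (m : ℕ) (hm : 0 < m) (t : Fin m → ℝ)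
    (ht : ∀ i, 0 < t i ∧ t i ≤ 1)
    (q : ℝ) (hq : (1 / (m : ℝ)) * ∑ j, t j ≤ q) :
    ∑ i, t i * (1 - t i) / q ^ 2 ≤ ∑ i, (1 - t i) / t i := by
  have hmR : (0:ℝ) < m := by exact_mod_cast hm
  set S : ℝ := ∑ j, t j with hSdef
  set A : ℝ := ∑ i, t i * (1 - t i) with hAdef
  set B : ℝ := ∑ i, (1 - t i) / t i with hBdef
  have hne : (univ : Finset (Fin m)).Nonempty := by
    simpa [Finset.univ_nonempty_iff] using Fin.pos_iff_nonempty.mp hm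
  have hS0 : 0 < S := Finset.sum_pos (fun i _ => (ht i).1) hne
  have hSm : S ≤ m := by
    calc S ≤ ∑ _j : Fin m, (1:ℝ) := Finset.sum_le_sum fun i _ => (ht i).2
    _ = m := by simp
  have hq0 : 0 < q := lt_of_lt_of_le (by positivity) hq
  have hqS : S ≤ m * q := by
    have := mul_le_mul_of_nonneg_left hq (le_of_lt hmR)
    calc S = (m:ℝ) * ((1 / (m : ℝ)) * S) := by field_simp
    _ ≤ m * q := this
  have hA0 : 0 ≤ A := Finset.sum_nonneg fun i _ =>
    mul_nonneg (ht i).1.le (by linarith [(ht i).2])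
  have hB0 : 0 ≤ B := Finset.sum_nonneg fun i _ =>
    div_nonneg (by linarith [(ht i).2]) (ht i).1.le
  -- Cauchy–Schwarz 1 : (∑ (1 - t i))² ≤ A * B
  have cauchy1 : ((m:ℝ) - S)^2 ≤ A * B := by
    have h := Finset.sum_mul_sq_le_sq_mul_sq univ
      (fun i => Real.sqrt (t i * (1 - t i))) (fun i => Real.sqrt ((1 - t i) / t i))
    have e1 : ∀ i : Fin m,
        Real.sqrt (t i * (1 - t i)) * Real.sqrt ((1 - t i) / t i) = 1 - t i := by
      intro i
      rw [← Real.sqrt_mul (mul_nonneg (ht i).1.le (by linarith [(ht i).2]))]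
      have : t i * (1 - t i) * ((1 - t i) / t i) = (1 - t i)^2 := by
        field_simp [(ht i).1.ne']
      rw [this, Real.sqrt_sq (by linarith [(ht i).2])]
    have e2 : ∀ i : Fin m, Real.sqrt (t i * (1 - t i)) ^ 2 = t i * (1 - t i) := by
      intro i
      exact Real.sq_sqrt (mul_nonneg (ht i).1.le (by linarith [(ht i).2]))
    have e3 : ∀ i : Fin m, Real.sqrt ((1 - t i) / t i) ^ 2 = (1 - t i) / t i := by
      intro i
      exact Real.sq_sqrt (div_nonneg (by linarith [(ht i).2]) (ht i).1.le)
    simp only [e1, e2, e3] at h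
    have : ∑ i : Fin m, (1 - t i) = (m:ℝ) - S := by
      rw [Finset.sum_sub_distrib]; simp [hSdef]
    rwa [this] at h
  -- Cauchy–Schwarz 2 : S² ≤ m * ∑ t²
  have cauchy2 : S^2 ≤ (m:ℝ) * ∑ i, t i ^ 2 := by
    have h := sq_sum_le_card_mul_sum_sq (s := (univ : Finset (Fin m))) (f := t)
    simpa using h
  have hA : A = S - ∑ i, t i ^ 2 := by
    rw [hAdef, ← Finset.sum_sub_distrib]
    exact Finset.sum_congr rfl fun i _ => by ring
  have key : (m:ℝ) * A ≤ S * ((m:ℝ) - S) := by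
    rw [hA]; nlinarith [cauchy2]
  -- goal rewriting
  rw [← Finset.sum_div]
  rw [div_le_iff₀ (by positivity : (0:ℝ) < q^2), ← hAdef]
  rcases eq_or_lt_of_le hA0 with hAe | hApos
  · rw [← hAe]; positivity
  · have h1 : (m:ℝ)^2 * A^2 ≤ S^2 * (A * B) := by
      have hmA : 0 ≤ (m:ℝ) * A := by positivity
      have := mul_le_mul key key hmA (by nlinarith)
      nlinarith [mul_le_mul_of_nonneg_left cauchy1 (sq_nonneg S)]
    have h2 : (m:ℝ)^2 * A ≤ S^2 * B := by
      have := (mul_le_mul_iff_of_pos_right hApos).mp (by nlinarith : ((m:ℝ)^2 * A) * A ≤ (S^2 * B) * A)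
      exact this
    have h3 : S^2 ≤ (m:ℝ)^2 * q^2 := by nlinarith
    nlinarith [mul_le_mul_of_nonneg_right h3 hB0, mul_pos hmR hmR]
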